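/- For a finite cycle set, every element of the structure monoid M is uniquely determined by the diagonal part of its image under the monomial representation; consequently Θ is injective on M and M embeds in the structure group G. -/

import Mathlib

/-- Dehornoy's `Ω` expression: `Omega op k t` is `Ω_{k+1}(t 0, …, t k)`,
defined by `Ω_1(x) = x` and
`Ω_k(x_1,…,x_k) = Ω_{k-1}(x_1,…,x_{k-1}) * Ω_{k-1}(x_1,…,x_{k-2},x_k)`. -/
def Omega {S : Type*} (op : S → S → S) : (k : ℕ) → (Fin (k + 1) → S) → S
  | 0, t => t 0
  | k + 1, t =>
      op (Omega op k fun i => t i.castSucc)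
        (Omega op k fun i =>
          if i = Fin.last k then t (Fin.last (k + 1)) else t i.castSucc)

/-- Dehornoy's `Π` expression: `PiExpr op ι k t = ι(Ω_1(t_1)) ⋯ ι(Ω_k(t_1,…,t_k))`. -/
def PiExpr {S M : Type*} [Monoid M] (op : S → S → S) (ι : S → M) :
    (k : ℕ) → (Fin k → S) → M
  | 0, _ => 1
  | k + 1, t => PiExpr op ι k (fun i => t i.castSucc) * ι (Omega op k t)

/-- The defining relations of the structure monoid: `s (s*t) = t (t*s)`. -/
def csRel {S : Type*} (op : S → S → S) (a b : FreeMonoid S) : Prop :=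
  ∃ s t : S, a = FreeMonoid.of s * FreeMonoid.of (op s t) ∧
    b = FreeMonoid.of t * FreeMonoid.of (op t s)

/-- The structure monoid `⟨S ∣ s(s*t) = t(t*s)⟩⁺` of a cycle set. -/
abbrev StructureMonoid {S : Type*} (op : S → S → S) := (conGen (csRel op)).Quotient

/-- The canonical generators of the structure monoid. -/
def mkM {S : Type*} (op : S → S → S) (s : S) : StructureMonoid op :=
  (conGen (csRel op)).mk' (FreeMonoid.of s)

/-- The permutation matrix of `σ`: row `i` has a `1` in column `σ i`. -/
def Pmat {ι : Type*} [DecidableEq ι] (R : Type*) [Semiring R] (σ : Equiv.Perm ι) :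
    Matrix ι ι R := Matrix.of fun i j => if j = σ i then 1 else 0

/-- The diagonal matrix `D_s = diag(1,…,q,…,1)` with `q` in position `s`. -/
noncomputable def Dmat {S : Type*} [DecidableEq S] (s : S) : Matrix S S (Polynomial ℚ) :=
  Matrix.diagonal fun t => if t = s then Polynomial.X else 1

/-- The permutation `ψ(s) : t ↦ s * t` attached to an element of a cycle set. -/
noncomputable def psi {S : Type*} (op : S → S → S) (hbij : ∀ s : S, Function.Bijective (op s))
    (s : S) : Equiv.Perm S := Equiv.ofBijective (op s) (hbij s)

/-- The monomial matrix `Θ(s) = D_s P_{ψ(s)}` associated to a generator. -/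
noncomputable def theta {S : Type*} [Fintype S] [DecidableEq S] (op : S → S → S)
    (hbij : ∀ s : S, Function.Bijective (op s)) (s : S) : Matrix S S (Polynomial ℚ) :=
  Dmat s * Pmat (Polynomial ℚ) (psi op hbij s)
/-- The defining relators of the structure group: `s (s*t) (t (t*s))⁻¹`. -/
def csGrpRels {S : Type*} (op : S → S → S) : Set (FreeGroup S) :=
  { r | ∃ s t : S, r = FreeGroup.of s * FreeGroup.of (op s t) *
      (FreeGroup.of t * FreeGroup.of (op t s))⁻¹ }

/-- The structure group `⟨S ∣ s(s*t) = t(t*s)⟩` of a cycle set. -/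
abbrev StructureGroup {S : Type*} (op : S → S → S) := PresentedGroup (csGrpRels op)


section CSAux

open Polynomial

variable {S : Type*}

/-- `Wfun op [x_k, …, x_1] u = Ω_{k+1}(x_1,…,x_k,u)`. -/
def Wfun (op : S → S → S) : List S → S → S
  | [], u => u
  | x :: l, u => op (Wfun op l x) (Wfun op l u)

/-- The permutation version of `Wfun`. -/
noncomputable def Wperm (op : S → S → S) (hbij : ∀ s : S, Function.Bijective (op s)) :
    List S → Equiv.Perm S
  | [] => Equiv.refl S
  | x :: l => (Wperm op hbij l).trans (psi op hbij (Wfun op l x))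

lemma Wperm_apply (op : S → S → S) (hbij : ∀ s : S, Function.Bijective (op s)) :
    ∀ (l : List S) (u : S), Wperm op hbij l u = Wfun op l u
  | [], u => rfl
  | x :: l, u => by
      simp only [Wperm, Equiv.trans_apply, Wperm_apply op hbij l, Wfun]
      rfl

/-- `PR op [x_k,…,x_1] = Π_k(x_1,…,x_k)` in the structure monoid. -/
def PR (op : S → S → S) : List S → StructureMonoid op
  | [] => 1
  | x :: l => PR op l * mkM op (Wfun op l x)

lemma mkM_mul_rel (op : S → S → S) (s t : S) :
    mkM op s * mkM op (op s t) = mkM op t * mkM op (op t s) := by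
  have h1 : mkM op s * mkM op (op s t)
      = (conGen (csRel op)).mk' (FreeMonoid.of s * FreeMonoid.of (op s t)) :=
    (map_mul _ _ _).symm
  have h2 : mkM op t * mkM op (op t s)
      = (conGen (csRel op)).mk' (FreeMonoid.of t * FreeMonoid.of (op t s)) :=
    (map_mul _ _ _).symm
  rw [h1, h2]
  exact ((conGen (csRel op)).eq).mpr (ConGen.Rel.of _ _ ⟨s, t, rfl, rfl⟩)

lemma Wfun_perm (op : S → S → S)
    (hcs : ∀ s t u : S, op (op s t) (op s u) = op (op t s) (op t u))
    {l l' : List S} (h : l.Perm l') : ∀ u, Wfun op l u = Wfun op l' u := by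
  induction h with
  | nil => intro u; rfl
  | cons x p ih => intro u; simp only [Wfun, ih]
  | swap x y l => intro u; simp only [Wfun]; exact hcs _ _ _
  | trans p q ih1 ih2 => intro u; rw [ih1, ih2]

lemma PR_perm (op : S → S → S)
    (hcs : ∀ s t u : S, op (op s t) (op s u) = op (op t s) (op t u))
    {l l' : List S} (h : l.Perm l') : PR op l = PR op l' := by
  induction h with
  | nil => rfl
  | cons x p ih => simp only [PR, ih, Wfun_perm op hcs p]
  | swap x y l =>
      show PR op l * mkM op (Wfun op l x) * mkM op (Wfun op (x :: l) y)
        = PR op l * mkM op (Wfun op l y) * mkM op (Wfun op (y :: l) x)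
      simp only [Wfun, mul_assoc]
      rw [mkM_mul_rel]
  | trans p q ih1 ih2 => rw [ih1, ih2]

section Mat

variable {ι R : Type*} [Fintype ι] [DecidableEq ι] [CommRing R]

lemma Pmat_mul_Pmat (σ τ : Equiv.Perm ι) :
    Pmat R σ * Pmat R τ = Pmat R (σ.trans τ) := by
  ext i k
  simp only [Pmat, Matrix.mul_apply, Matrix.of_apply, ite_mul, one_mul, zero_mul,
    Equiv.trans_apply]
  rw [Finset.sum_eq_single (σ i) (fun b _ hb => by simp [hb]) (by simp)]
  simp
  exact if_congr Iff.rfl rfl rfl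

lemma Pmat_refl : Pmat R (Equiv.refl ι) = 1 := by
  ext i k
  simp [Pmat, Matrix.one_apply, eq_comm]

lemma Pmat_mul_diagonal (σ : Equiv.Perm ι) (d : ι → R) :
    Pmat R σ * Matrix.diagonal d = Matrix.diagonal (fun i => d (σ i)) * Pmat R σ := by
  ext i k
  simp only [Matrix.mul_apply, Pmat, Matrix.of_apply, Matrix.diagonal_apply, ite_mul, one_mul,
    zero_mul, mul_ite, mul_one, mul_zero, Finset.sum_ite_eq, Finset.mem_univ, if_true]
  rw [Finset.sum_eq_single (σ i) (fun b _ hb => by simp [hb, Ne.symm hb]) (by simp)]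
  rw [Finset.sum_eq_single (σ.symm k) (fun b _ hb => by
    simp only [ite_eq_right_iff]
    intro h1 h2
    exact absurd (σ.eq_symm_apply.mpr h1.symm) hb) (by simp)]
  by_cases h : k = σ i
  · have : i = σ.symm k := by rw [h]; simp
    simp [h, ← this]
  · have h2 : ¬ i = σ.symm k := fun hh => h (by rw [hh]; simp)
    simp only [h, if_false, h2, mul_zero]
    rw [Equiv.apply_symm_apply, if_neg (show ¬ σ i = k from fun hh => h hh.symm)]
    simp

lemma Pmat_map {R' : Type*} [CommRing R'] (f : R →+* R') (σ : Equiv.Perm ι) :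
    (Pmat R σ).map f = Pmat R' σ := by
  ext i k
  simp [Pmat, apply_ite f]

end Mat

section Core

variable [Fintype S] [DecidableEq S]

open Polynomial in
lemma theta_core (op : S → S → S) (hbij : ∀ s : S, Function.Bijective (op s))
    (Θ : StructureMonoid op →* Matrix S S (Polynomial ℚ))
    (hΘ : ∀ s : S, Θ (mkM op s) = theta op hbij s) :
    ∀ l : List S, Θ (PR op l)
      = Matrix.diagonal (fun t => (X : ℚ[X]) ^ l.count t) * Pmat ℚ[X] (Wperm op hbij l) := by
  intro l
  induction l with
  | nil =>
      simp only [PR, map_one, List.count_nil, pow_zero, Wperm, Pmat_refl, mul_one]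
      rw [show (Matrix.diagonal (fun _ : S => (1:ℚ[X]))) = 1 from Matrix.diagonal_one]
  | cons u l ih =>
      have hinj : Function.Injective (Wfun op l) := by
        intro a b hab
        have : Wperm op hbij l a = Wperm op hbij l b := by
          rw [Wperm_apply, Wperm_apply, hab]
        exact (Wperm op hbij l).injective this
      have hfun : (fun i => (X:ℚ[X]) ^ List.count i l
            * if (Wperm op hbij l) i = Wfun op l u then X else 1)
          = fun t => (X:ℚ[X]) ^ List.count t (u :: l) := by
        funext t
        rw [Wperm_apply, List.count_cons]
        by_cases h : t = u
        · simp [h, pow_add]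
        · have h3 : ¬ Wfun op l t = Wfun op l u := fun hh => h (hinj hh)
          simp [h3, show u ≠ t from fun hh => h hh.symm]
      show Θ (PR op l * mkM op (Wfun op l u)) = _
      rw [map_mul, ih, hΘ]
      rw [theta, Dmat]
      rw [show Wperm op hbij (u :: l)
        = (Wperm op hbij l).trans (psi op hbij (Wfun op l u)) from rfl]
      rw [← Pmat_mul_Pmat (R := ℚ[X]) (Wperm op hbij l) (psi op hbij (Wfun op l u))]
      rw [mul_assoc, ← mul_assoc (Pmat ℚ[X] (Wperm op hbij l)),
        Pmat_mul_diagonal, ← mul_assoc, ← mul_assoc, Matrix.diagonal_mul_diagonal,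
        mul_assoc, hfun]

lemma pr_surj (op : S → S → S) (hbij : ∀ s : S, Function.Bijective (op s)) :
    ∀ f : StructureMonoid op, ∃ l : List S, f = PR op l := by
  have key : ∀ lw : List S, ∃ l : List S,
      (conGen (csRel op)).mk' (FreeMonoid.ofList lw) = PR op l := by
    intro lw
    induction lw using List.reverseRecOn with
    | nil =>
        refine ⟨[], ?_⟩
        rw [show FreeMonoid.ofList ([] : List S) = 1 from rfl, map_one]
        rfl
    | append_singleton w s ih =>
        obtain ⟨l, hl⟩ := ih
        refine ⟨(Wperm op hbij l).symm s :: l, ?_⟩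
        rw [FreeMonoid.ofList_append, map_mul, hl, FreeMonoid.ofList_singleton]
        show _ = PR op l * mkM op (Wfun op l ((Wperm op hbij l).symm s))
        rw [← Wperm_apply op hbij, Equiv.apply_symm_apply]
        rfl
  intro f
  obtain ⟨w, rfl⟩ := Con.mk'_surjective f
  obtain ⟨l, hl⟩ := key (FreeMonoid.toList w)
  rw [FreeMonoid.ofList_toList] at hl
  exact ⟨l, hl⟩

end Core

end CSAux

/-- Every element of the structure monoid of a finite cycle set is uniquely determined by
the diagonal part of its image under the monomial representation; consequently the
representation is injective on the monoid and the monoid embeds in the structure group. -/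
theorem monoid_injective {S : Type*} [Fintype S] [DecidableEq S] (op : S → S → S)
    (hbij : ∀ s : S, Function.Bijective (op s))
    (hcs : ∀ s t u : S, op (op s t) (op s u) = op (op t s) (op t u))
    (Θ : StructureMonoid op →* Matrix S S (Polynomial ℚ))
    (hΘ : ∀ s : S, Θ (mkM op s) = theta op hbij s) :
    (∀ (f g : StructureMonoid op) (dvec : S → Polynomial ℚ) (σf σg : Equiv.Perm S),
        Θ f = Matrix.diagonal dvec * Pmat (Polynomial ℚ) σf →
        Θ g = Matrix.diagonal dvec * Pmat (Polynomial ℚ) σg → f = g) ∧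
    Function.Injective Θ ∧
    ∃ φ : StructureMonoid op →* StructureGroup op,
      (∀ s : S, φ (mkM op s) = PresentedGroup.of (rels := csGrpRels op) s) ∧
        Function.Injective φ := by
  classical
  -- key extraction lemma
  have extract : ∀ (l : List S) (dvec : S → Polynomial ℚ) (σ : Equiv.Perm S)
      (f : StructureMonoid op), f = PR op l →
      Θ f = Matrix.diagonal dvec * Pmat (Polynomial ℚ) σ →
      ∀ t, dvec t = (Polynomial.X : Polynomial ℚ) ^ l.count t := by
    intro l dvec σ f hf hΘf t
    have hc := theta_core op hbij Θ hΘ l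
    rw [← hf] at hc
    have h := congrArg (fun M => M t (Wperm op hbij l t)) (hc.symm.trans hΘf)
    simp only [Matrix.diagonal_mul] at h
    have h1 : Pmat (Polynomial ℚ) (Wperm op hbij l) t (Wperm op hbij l t) = 1 := by
      simp [Pmat]
    rw [h1, mul_one] at h
    by_cases hσ : Wperm op hbij l t = σ t
    · have h2 : Pmat (Polynomial ℚ) σ t (Wperm op hbij l t) = 1 := by
        simp [Pmat, hσ]
      rw [h2, mul_one] at h
      exact h.symm
    · have h2 : Pmat (Polynomial ℚ) σ t (Wperm op hbij l t) = 0 := by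
        simp [Pmat, hσ]
      rw [h2, mul_zero] at h
      exact absurd h (pow_ne_zero _ Polynomial.X_ne_zero)
  have part1 : ∀ (f g : StructureMonoid op) (dvec : S → Polynomial ℚ) (σf σg : Equiv.Perm S),
      Θ f = Matrix.diagonal dvec * Pmat (Polynomial ℚ) σf →
      Θ g = Matrix.diagonal dvec * Pmat (Polynomial ℚ) σg → f = g := by
    intro f g dvec σf σg hf hg
    obtain ⟨l, hl⟩ := pr_surj op hbij f
    obtain ⟨l', hl'⟩ := pr_surj op hbij g
    have e1 := extract l dvec σf f hl hf
    have e2 := extract l' dvec σg g hl' hg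
    have hcount : ∀ t, l.count t = l'.count t := by
      intro t
      have := (e1 t).symm.trans (e2 t)
      have := congrArg Polynomial.natDegree this
      simpa [Polynomial.natDegree_X_pow] using this
    rw [hl, hl']
    exact PR_perm op hcs (List.perm_iff_count.mpr hcount)
  refine ⟨part1, ?_, ?_⟩
  · -- injectivity of Θ
    intro f g hfg
    obtain ⟨l, hl⟩ := pr_surj op hbij f
    have hc := theta_core op hbij Θ hΘ l
    rw [← hl] at hc
    exact part1 f g _ (Wperm op hbij l) (Wperm op hbij l) hc (hfg.symm.trans hc)
  · -- the embedding into the structure group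
    have hG : ∀ s t : S, (PresentedGroup.of s : StructureGroup op)
        * PresentedGroup.of (op s t)
        = PresentedGroup.of t * PresentedGroup.of (op t s) := by
      intro s t
      have hr : FreeGroup.of s * FreeGroup.of (op s t)
          * (FreeGroup.of t * FreeGroup.of (op t s))⁻¹ ∈ csGrpRels op := ⟨s, t, rfl⟩
      have h1 : (QuotientGroup.mk (FreeGroup.of s * FreeGroup.of (op s t)
          * (FreeGroup.of t * FreeGroup.of (op t s))⁻¹) : StructureGroup op) = 1 :=
        (QuotientGroup.eq_one_iff _).mpr (Subgroup.subset_normalClosure hr)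
      have h2 : ((QuotientGroup.mk' (Subgroup.normalClosure (csGrpRels op)))
            (FreeGroup.of s * FreeGroup.of (op s t)))
          * ((QuotientGroup.mk' (Subgroup.normalClosure (csGrpRels op)))
            (FreeGroup.of t * FreeGroup.of (op t s)))⁻¹ = 1 := by
        rw [← map_inv, ← map_mul]
        exact h1
      have h3 := mul_inv_eq_one.mp h2
      simp only [map_mul] at h3
      exact h3
    -- the monoid hom φ
    have hker : conGen (csRel op) ≤ Con.ker
        (FreeMonoid.lift fun s => (PresentedGroup.of s : StructureGroup op)) := by
      apply Con.conGen_le.mpr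
      intro x y hxy
      obtain ⟨s, t, hx, hy⟩ := hxy
      rw [Con.ker_rel, hx, hy, map_mul, map_mul, FreeMonoid.lift_eval_of,
        FreeMonoid.lift_eval_of, FreeMonoid.lift_eval_of, FreeMonoid.lift_eval_of]
      exact hG s t
    set φ : StructureMonoid op →* StructureGroup op :=
      (conGen (csRel op)).lift _ hker with hφdef
    have hφof : ∀ s : S, φ (mkM op s) = PresentedGroup.of (rels := csGrpRels op) s := by
      intro s
      rw [hφdef, mkM, Con.lift_mk', FreeMonoid.lift_eval_of]
    refine ⟨φ, hφof, ?_⟩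
    -- theta relation in matrices
    have hθrel : ∀ s t : S, theta op hbij s * theta op hbij (op s t)
        = theta op hbij t * theta op hbij (op t s) := by
      intro s t
      rw [← hΘ s, ← hΘ t, ← hΘ (op s t), ← hΘ (op t s), ← map_mul, ← map_mul,
        mkM_mul_rel]
    -- units over RatFunc
    let C : Polynomial ℚ →+* RatFunc ℚ := algebraMap (Polynomial ℚ) (RatFunc ℚ)
    have hCinj : Function.Injective C := RatFunc.algebraMap_injective ℚ
    let dR : S → S → RatFunc ℚ := fun s t => if t = s then RatFunc.X else 1
    have hdR : ∀ s t, dR s t ≠ 0 := by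
      intro s t
      by_cases h : t = s <;> simp [dR, h, RatFunc.X_ne_zero]
    let U : S → (Matrix S S (RatFunc ℚ))ˣ := fun s =>
      { val := Matrix.diagonal (dR s) * Pmat (RatFunc ℚ) (psi op hbij s)
        inv := Pmat (RatFunc ℚ) (psi op hbij s).symm * Matrix.diagonal (fun t => (dR s t)⁻¹)
        val_inv := by
          rw [mul_assoc, ← mul_assoc (Pmat (RatFunc ℚ) (psi op hbij s)), Pmat_mul_Pmat,
            Equiv.self_trans_symm, Pmat_refl, one_mul, Matrix.diagonal_mul_diagonal]
          rw [show (fun i => dR s i * (dR s i)⁻¹) = fun _ => (1 : RatFunc ℚ) from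
            funext fun i => mul_inv_cancel₀ (hdR s i)]
          exact Matrix.diagonal_one
        inv_val := by
          rw [mul_assoc, ← mul_assoc (Matrix.diagonal fun t => (dR s t)⁻¹),
            Matrix.diagonal_mul_diagonal]
          rw [show (fun i => (dR s i)⁻¹ * dR s i) = fun _ => (1 : RatFunc ℚ) from
            funext fun i => inv_mul_cancel₀ (hdR s i)]
          rw [Matrix.diagonal_one, one_mul, Pmat_mul_Pmat, Equiv.symm_trans_self, Pmat_refl] }
    have hUval : ∀ s : S, (U s : Matrix S S (RatFunc ℚ)) = (theta op hbij s).map C := by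
      intro s
      have hfun : (fun m => C (if m = s then Polynomial.X else 1)) = dR s :=
        funext fun t => by by_cases h : t = s <;> simp [dR, h, C, RatFunc.algebraMap_X]
      rw [theta, Matrix.map_mul, Pmat_map C, Dmat, Matrix.diagonal_map (map_zero C), hfun]
    have hrels : ∀ r ∈ csGrpRels op, FreeGroup.lift U r = 1 := by
      rintro r ⟨s, t, rfl⟩
      rw [map_mul, map_mul, map_inv, map_mul, FreeGroup.lift_apply_of, FreeGroup.lift_apply_of,
        FreeGroup.lift_apply_of, FreeGroup.lift_apply_of, mul_inv_eq_one]
      apply Units.ext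
      rw [Units.val_mul, Units.val_mul, hUval, hUval, hUval, hUval,
        ← Matrix.map_mul, ← Matrix.map_mul, hθrel]
    let Ψ : StructureGroup op →* (Matrix S S (RatFunc ℚ))ˣ := PresentedGroup.toGroup hrels
    -- two monoid homs from the structure monoid to matrices over RatFunc agree
    let A1 : StructureMonoid op →* Matrix S S (RatFunc ℚ) :=
      (C.mapMatrix).toMonoidHom.comp Θ
    let A2 : StructureMonoid op →* Matrix S S (RatFunc ℚ) :=
      (Units.coeHom _).comp (Ψ.comp φ)
    have hA : A2 = A1 := by
      have h1 : A2.comp (conGen (csRel op)).mk' = A1.comp (conGen (csRel op)).mk' := by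
        apply FreeMonoid.hom_eq
        intro s
        show A2 (mkM op s) = A1 (mkM op s)
        show ((Ψ (φ (mkM op s))) : Matrix S S (RatFunc ℚ)) = C.mapMatrix (Θ (mkM op s))
        rw [hφof, hΘ]
        show ((Ψ (PresentedGroup.of s)) : Matrix S S (RatFunc ℚ)) = (theta op hbij s).map C
        rw [show Ψ (PresentedGroup.of s) = U s from PresentedGroup.toGroup.of hrels]
        exact hUval s
      apply MonoidHom.ext
      intro m
      obtain ⟨w, rfl⟩ := Con.mk'_surjective m
      exact DFunLike.congr_fun h1 w
    intro a b hab
    have h2 : A2 a = A2 b := by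
      show ((Ψ (φ a) : Matrix S S (RatFunc ℚ))) = _
      rw [hab]
      rfl
    rw [hA] at h2
    have h3 : Θ a = Θ b := by
      have h4 : (Θ a).map C = (Θ b).map C := h2
      apply Matrix.ext
      intro i j
      have h5 := congrArg (fun M => M i j) h4
      simp only [Matrix.map_apply] at h5
      exact hCinj h5
    -- use injectivity of Θ (part 2 re-derived)
    obtain ⟨l, hl⟩ := pr_surj op hbij a
    have hc := theta_core op hbij Θ hΘ l
    rw [← hl] at hc
    exact part1 a b _ (Wperm op hbij l) (Wperm op hbij l) hc (h3.symm.trans hc)
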